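/- arXiv:2510.18748 — 4 statements merged into one kernel-verified Lean document; each statement's English description precedes it below -/
import Mathlib

section
/- Let Q• be a chain complex of projective left R-modules with Q_i = 0 for i > n and for i < 0, whose homology satisfies H_j(Q•) ≅ N for j = 0,1 and H_j(Q•) = 0 otherwise. Then there exists a chain map Ψ : ΣQ• → Q• (where Σ denotes suspension) inducing an isomorphism H_1(ΣQ•) → H_1(Q•). -/
/-- If `Q•` is a chain complex of projective `R`-modules, vanishing in
degrees `> n`, with homology `≅ N` in degrees `0, 1` and zero elsewhere, then there is
a chain map `Ψ : ΣQ• → Q•` (given degreewise by `ψ j : Q j → Q (j+1)`, satisfying the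
suspension chain-map identities) inducing an isomorphism `H₁(ΣQ•) → H₁(Q•)`.
Here `H₁(ΣQ•) = Q 0 / im (d 1 → 0)` and the last two conjuncts express surjectivity and
injectivity of the induced map on first homology. -/
theorem stmt5 (R : Type) [Ring R] (n : ℕ) (N : Type) [AddCommGroup N] [Module R N]
    (Q : ℕ → Type) [∀ j, AddCommGroup (Q j)] [∀ j, Module R (Q j)]
    (d : ∀ j, Q (j + 1) →ₗ[R] Q j)
    (hdd : ∀ j (q : Q (j + 2)), d j (d (j + 1) q) = 0)
    (hproj : ∀ j, Module.Projective R (Q j))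
    (hbdd : ∀ i, n < i → Subsingleton (Q i))
    (h0 : Nonempty ((Q 0 ⧸ LinearMap.range (d 0)) ≃ₗ[R] N))
    (h1 : Nonempty ((↥(LinearMap.ker (d 0)) ⧸
        Submodule.comap (LinearMap.ker (d 0)).subtype (LinearMap.range (d 1))) ≃ₗ[R] N))
    (hex : ∀ j, 1 ≤ j → LinearMap.ker (d j) ≤ LinearMap.range (d (j + 1))) :
    ∃ ψ : ∀ j, Q j →ₗ[R] Q (j + 1),
      (∀ q : Q 0, d 0 (ψ 0 q) = 0) ∧
      (∀ j (q : Q (j + 1)), d (j + 1) (ψ (j + 1) q) = - ψ j (d j q)) ∧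
      (∀ z : Q 1, d 0 z = 0 → ∃ (q : Q 0) (w : Q 2), z = ψ 0 q + d 1 w) ∧
      (∀ q : Q 0, (∃ w : Q 2, ψ 0 q = d 1 w) → ∃ u : Q 1, q = d 0 u) := by
  classical
  obtain ⟨e0⟩ := h0
  obtain ⟨e1⟩ := h1
  set K := LinearMap.ker (d 0) with hK
  set I := Submodule.comap K.subtype (LinearMap.range (d 1)) with hI
  -- the composite iso  Q0/im d0 ≃ N ≃ ker d0 / im d1
  let f : (Q 0 ⧸ LinearMap.range (d 0)) →ₗ[R] (K ⧸ I) :=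
    (e1.symm.toLinearMap) ∘ₗ (e0.toLinearMap)
  have hfinj : Function.Injective f := (e1.symm.toEquiv.injective).comp e0.toEquiv.injective
  have hfsurj : Function.Surjective f := (e1.symm.toEquiv.surjective).comp e0.toEquiv.surjective
  -- lift Q0 → K/I through K → K/I using projectivity of Q0
  haveI := hproj 0
  obtain ⟨ψ0', hψ0'⟩ := Module.projective_lifting_property I.mkQ
    (f ∘ₗ (LinearMap.range (d 0)).mkQ) (Submodule.mkQ_surjective I)
  let ψ0 : Q 0 →ₗ[R] Q 1 := K.subtype ∘ₗ ψ0'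
  have hψ0comm : ∀ q : Q 0, I.mkQ (ψ0' q) = f ((LinearMap.range (d 0)).mkQ q) := by
    intro q
    exact congrArg (fun g => g q) (congrArg DFunLike.coe hψ0')
  have hA : ∀ q : Q 0, d 0 (ψ0 q) = 0 := fun q => (ψ0' q).2
  -- ψ0 sends boundaries (im d0) into im d1
  have hB : ∀ q : Q 1, ψ0 (d 0 q) ∈ LinearMap.range (d 1) := by
    intro q
    have h1' : (LinearMap.range (d 0)).mkQ (d 0 q) = 0 := by
      simp [Submodule.Quotient.mk_eq_zero]
    have h2 : I.mkQ (ψ0' (d 0 q)) = 0 := by rw [hψ0comm, h1', map_zero]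
    have h3 : ψ0' (d 0 q) ∈ I := (Submodule.Quotient.mk_eq_zero I).1 h2
    exact h3
  -- inductive step for the chain map
  have step : ∀ (j : ℕ) (φ : Q j →ₗ[R] Q (j + 1)),
      (∀ q : Q (j + 1), φ (d j q) ∈ LinearMap.range (d (j + 1))) →
      ∃ φ' : Q (j + 1) →ₗ[R] Q (j + 2),
        (∀ q : Q (j + 1), d (j + 1) (φ' q) = - φ (d j q)) ∧
        (∀ q : Q (j + 2), φ' (d (j + 1) q) ∈ LinearMap.range (d (j + 2))) := by
    intro j φ hφ
    haveI := hproj (j + 1)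
    have hmem : ∀ q : Q (j + 1), - φ (d j q) ∈ LinearMap.range (d (j + 1)) :=
      fun q => neg_mem (hφ q)
    let g : Q (j + 1) →ₗ[R] LinearMap.range (d (j + 1)) :=
      LinearMap.codRestrict (LinearMap.range (d (j + 1))) (- (φ ∘ₗ d j)) (fun q => hmem q)
    obtain ⟨φ', hφ'⟩ := Module.projective_lifting_property (d (j + 1)).rangeRestrict g
      (LinearMap.surjective_rangeRestrict (d (j + 1)))
    have hcomm : ∀ q : Q (j + 1), d (j + 1) (φ' q) = - φ (d j q) := by
      intro q
      have := congrArg (fun m => (m q : Q (j + 1))) (congrArg DFunLike.coe hφ')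
      simpa [g, LinearMap.rangeRestrict] using this
    refine ⟨φ', hcomm, ?_⟩
    intro q
    have hk : d (j + 1) (φ' (d (j + 1) q)) = 0 := by
      rw [hcomm]
      simp [hdd j q]
    exact hex (j + 1) (Nat.le_add_left 1 j) hk
  -- recursive construction of the whole chain map
  let F : ∀ j, Σ' φ : Q j →ₗ[R] Q (j + 1),
      ∀ q : Q (j + 1), φ (d j q) ∈ LinearMap.range (d (j + 1)) :=
    fun j => Nat.rec ⟨ψ0, hB⟩
      (fun k ih => ⟨(step k ih.1 ih.2).choose, (step k ih.1 ih.2).choose_spec.2⟩) j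
  have hchain : ∀ j (q : Q (j + 1)), d (j + 1) ((F (j + 1)).1 q) = - (F j).1 (d j q) :=
    fun j q => (step j (F j).1 (F j).2).choose_spec.1 q
  refine ⟨fun j => (F j).1, hA, hchain, ?_, ?_⟩
  · -- surjectivity on H1
    intro z hz
    obtain ⟨qbar, hqbar⟩ := hfsurj (I.mkQ ⟨z, hz⟩)
    obtain ⟨q, rfl⟩ := Submodule.mkQ_surjective _ qbar
    have h2 : I.mkQ (ψ0' q) = I.mkQ ⟨z, hz⟩ := by rw [hψ0comm, hqbar]
    have h3 : (⟨z, hz⟩ : K) - ψ0' q ∈ I := by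
      have h2' := (Submodule.Quotient.eq I).1 h2
      simpa using I.neg_mem h2'
    have h3' : K.subtype ((⟨z, hz⟩ : K) - ψ0' q) ∈ LinearMap.range (d 1) := h3
    obtain ⟨w, hw⟩ := h3'
    refine ⟨q, w, ?_⟩
    have hzz : z - ψ0 q = d 1 w := by
      rw [hw]; simp [ψ0]
    linear_combination (norm := module) hzz
  · -- injectivity on H1
    intro q ⟨w, hw⟩
    have h3 : ψ0' q ∈ I := ⟨w, hw.symm⟩
    have h4 : f ((LinearMap.range (d 0)).mkQ q) = 0 := by
      rw [← hψ0comm q]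
      simpa using (Submodule.Quotient.mk_eq_zero I).2 h3
    have h5 : (LinearMap.range (d 0)).mkQ q = 0 := by
      apply hfinj
      simpa using h4
    obtain ⟨u, hu⟩ := (Submodule.Quotient.mk_eq_zero _).1 h5
    exact ⟨u, hu.symm⟩
end

section
/- (Shamash) Let x be a central element of R annihilating a left R-module N, S = R/(x), P• → N a projective resolution over R, and {φ_i : P_{i−1} → P_i} a null-homotopy of the lift of multiplication by x to P•. Then the reduced maps φ̄_i = φ_i ⊗_R S define a chain map Ψ : Σ(P• ⊗_R S) → P• ⊗_R S, i.e. φ̄_{i+1} d̄_{i+1} = −d̄_i φ̄_i for all i, and Ψ induces an isomorphism on first homology groups. -/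
/-- The submodule `xM ⊆ M` of multiples of a ring element `x`; `M ⧸ xsub R x M`
realizes the reduction `M ⊗_R R/(x)`. -/
def xsub (R : Type) [Ring R] (x : R) (M : Type) [AddCommGroup M] [Module R M] :
    Submodule R M :=
  Submodule.span R {m : M | ∃ p : M, m = x • p}

/-- The map induced on reductions mod `x` by an `R`-linear map (the functor `- ⊗_R S`). -/
def redMap (R : Type) [Ring R] (x : R) {M N : Type} [AddCommGroup M] [Module R M]
    [AddCommGroup N] [Module R N] (f : M →ₗ[R] N) :
    (M ⧸ xsub R x M) →ₗ[R] (N ⧸ xsub R x N) :=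
  Submodule.mapQ _ _ f (by
    rw [xsub, Submodule.span_le]
    rintro m ⟨p, rfl⟩
    refine Submodule.mem_comap.mpr ?_
    rw [map_smul]
    exact Submodule.subset_span ⟨f p, rfl⟩)


lemma mem_xsub_iff {R : Type} [Ring R] {x : R} (hx : ∀ r : R, r * x = x * r)
    {M : Type} [AddCommGroup M] [Module R M] {m : M} :
    m ∈ xsub R x M ↔ ∃ p : M, m = x • p := by
  constructor
  · intro hm
    have hle : xsub R x M ≤
        ({ carrier := {m : M | ∃ p : M, m = x • p}
           add_mem' := by rintro a b ⟨p, rfl⟩ ⟨q, rfl⟩; exact ⟨p + q, (smul_add x p q).symm⟩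
           zero_mem' := ⟨0, (smul_zero x).symm⟩
           smul_mem' := by
             rintro r a ⟨p, rfl⟩
             exact ⟨r • p, by rw [smul_smul, smul_smul, hx r]⟩ } : Submodule R M) :=
      Submodule.span_le.mpr fun m hm => hm
    exact hle hm
  · rintro ⟨p, rfl⟩
    exact Submodule.subset_span ⟨p, rfl⟩

lemma smul_eq_zero_proj {R : Type} [Ring R] {x : R} (hreg : IsRegular x)
    {P : Type} [AddCommGroup P] [Module R P] (hP : Module.Projective R P)
    {p : P} (h : x • p = 0) : p = 0 := by
  obtain ⟨s, hs⟩ := hP.out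
  have hsz : s p = 0 := by
    have : x • s p = 0 := by rw [← map_smul, h, map_zero]
    ext a
    have := congrArg (fun f => f a) this
    simp only [Finsupp.smul_apply, smul_eq_mul, Finsupp.coe_zero, Pi.zero_apply] at this ⊢
    exact hreg.left (by simpa using this)
  have := hs p
  rw [hsz] at this
  simpa using this.symm

/-- Shamash: Let `x` be a central element of `R` annihilating a left
`R`-module `N`, `S = R/(x)`, `P• → N` a projective resolution over `R`, and
`{φ_i : P_{i-1} → P_i}` a null-homotopy of the lift of multiplication by `x` to `P•`.
Then the reduced maps `φ̄_i = φ_i ⊗_R S` define a chain map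
`Ψ : Σ(P• ⊗_R S) → P• ⊗_R S`, i.e. `φ̄_{i+1} d̄_{i+1} = -d̄_i φ̄_i` for all `i`
(in degree `0` this reads `d̄_1 ∘ φ̄_1 = 0`), and `Ψ` induces an isomorphism on first
homology groups (the last two conjuncts express surjectivity and injectivity of the
induced map `H₁(ΣP̄•) = P̄₀/im d̄₁ → H₁(P̄•)`). -/
theorem stmt6 (R : Type) [Ring R] (x : R)
    (hx : ∀ r : R, r * x = x * r) (hreg : IsRegular x)
    (N : Type) [AddCommGroup N] [Module R N] (hxN : ∀ v : N, x • v = 0)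
    (P : ℕ → Type) [∀ j, AddCommGroup (P j)] [∀ j, Module R (P j)]
    (hproj : ∀ j, Module.Projective R (P j))
    (d : ∀ j, P (j + 1) →ₗ[R] P j) (ε : P 0 →ₗ[R] N)
    (hεsurj : Function.Surjective ε)
    (hex0 : LinearMap.ker ε = LinearMap.range (d 0))
    (hex : ∀ j, LinearMap.ker (d j) = LinearMap.range (d (j + 1)))
    (φ : ∀ j, P j →ₗ[R] P (j + 1))
    (hh0 : ∀ p : P 0, d 0 (φ 0 p) = x • p)
    (hh : ∀ j (p : P (j + 1)), φ j (d j p) + d (j + 1) (φ (j + 1) p) = x • p) :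
    -- the reduced maps form a chain map Σ(P ⊗ S) ⟶ P ⊗ S :
    (∀ q, redMap R x (d 0) (redMap R x (φ 0) q) = 0) ∧
    (∀ j q, redMap R x (d (j + 1)) (redMap R x (φ (j + 1)) q) =
      - redMap R x (φ j) (redMap R x (d j) q)) ∧
    -- it induces an isomorphism on first homology groups :
    (∀ z, redMap R x (d 0) z = 0 →
      ∃ q w, z = redMap R x (φ 0) q + redMap R x (d 1) w) ∧
    (∀ q, (∃ w, redMap R x (φ 0) q = redMap R x (d 1) w) →
      ∃ u, q = redMap R x (d 0) u) := by
  set Q := fun j => P j ⧸ xsub R x (P j) with hQ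
  have mk_surj : ∀ j (q : Q j), ∃ p : P j, Submodule.Quotient.mk p = q :=
    fun j q => Submodule.Quotient.mk_surjective _ q
  have red_mk : ∀ (j k : ℕ) (f : P j →ₗ[R] P k) (p : P j),
      redMap R x f (Submodule.Quotient.mk p) = Submodule.Quotient.mk (f p) :=
    fun j k f p => Submodule.mapQ_apply _ _ _ _
  refine ⟨?_, ?_, ?_, ?_⟩
  · intro q
    obtain ⟨p, rfl⟩ := mk_surj 0 q
    rw [red_mk, red_mk, Submodule.Quotient.mk_eq_zero, hh0]
    exact (mem_xsub_iff hx).mpr ⟨p, rfl⟩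
  · intro j q
    obtain ⟨p, rfl⟩ := mk_surj (j + 1) q
    rw [red_mk, red_mk, red_mk, red_mk, eq_neg_iff_add_eq_zero, ← Submodule.Quotient.mk_add,
      Submodule.Quotient.mk_eq_zero]
    exact (mem_xsub_iff hx).mpr ⟨p, by rw [← hh j p]; abel⟩
  · intro z hz
    obtain ⟨p, rfl⟩ := mk_surj 1 z
    rw [red_mk, Submodule.Quotient.mk_eq_zero] at hz
    obtain ⟨u, hu⟩ := (mem_xsub_iff hx).mp hz
    have hker : p - φ 0 u ∈ LinearMap.ker (d 0) := by
      simp [LinearMap.mem_ker, map_sub, hh0, hu]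
    rw [hex 0] at hker
    obtain ⟨w, hw⟩ := hker
    refine ⟨Submodule.Quotient.mk u, Submodule.Quotient.mk w, ?_⟩
    rw [red_mk, red_mk, ← Submodule.Quotient.mk_add, hw]
    congr 1
    abel
  · rintro q ⟨w, hw⟩
    obtain ⟨u, rfl⟩ := mk_surj 0 q
    obtain ⟨v, rfl⟩ := mk_surj 2 w
    rw [red_mk, red_mk, Submodule.Quotient.eq] at hw
    obtain ⟨c, hc⟩ := (mem_xsub_iff hx).mp hw
    have hd1 : d 0 (d 1 v) = 0 := by
      have : d 1 v ∈ LinearMap.ker (d 0) := (hex 0).symm ▸ ⟨v, rfl⟩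
      exact this
    have hkey : x • (u - d 0 c) = 0 := by
      have := congrArg (d 0) hc
      rw [map_sub, hh0, hd1, sub_zero, map_smul] at this
      rw [smul_sub, this, sub_self]
    have := smul_eq_zero_proj hreg (hproj 0) hkey
    have hu : u = d 0 c := by rwa [sub_eq_zero] at this
    exact ⟨Submodule.Quotient.mk c, by rw [red_mk, hu]⟩
end

section
/- (Fox) Let F be the free group on x_1, …, x_n. For each i there is a unique derivation ∂/∂x_i : F → ℤF (satisfying D(uv) = D(u) + u·D(v)) with ∂x_j/∂x_i = δ_{ij}, and for every y ∈ F the fundamental formula y − 1 = Σ_{i=1}^n (∂y/∂x_i)(x_i − 1) holds in ℤF. -/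
namespace Stmt14Aux

variable {n : ℕ}

abbrev FG (n : ℕ) := FreeGroup (Fin n)
abbrev AG (n : ℕ) := MonoidAlgebra ℤ (FG n)

noncomputable def ofg {n : ℕ} : FG n →* AG n := MonoidAlgebra.of ℤ (FG n)

lemma ofg_eq {n : ℕ} : (MonoidAlgebra.of ℤ (FG n)) = ofg (n := n) := rfl

structure Fox (n : ℕ) where
  g : FG n
  a : AG n

lemma Fox.ext' (x y : Fox n) (h1 : x.g = y.g) (h2 : x.a = y.a) : x = y := by
  cases x; cases y; simp_all

noncomputable instance : Mul (Fox n) := ⟨fun x y => ⟨x.g * y.g, x.a + ofg x.g * y.a⟩⟩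
@[simp] lemma mul_g (x y : Fox n) : (x * y).g = x.g * y.g := rfl
@[simp] lemma mul_a (x y : Fox n) : (x * y).a = x.a + ofg x.g * y.a := rfl
noncomputable instance : One (Fox n) := ⟨⟨1, 0⟩⟩
@[simp] lemma one_g : (1 : Fox n).g = 1 := rfl
@[simp] lemma one_a : (1 : Fox n).a = 0 := rfl
noncomputable instance : Inv (Fox n) := ⟨fun x => ⟨x.g⁻¹, -(ofg x.g⁻¹ * x.a)⟩⟩
@[simp] lemma inv_g (x : Fox n) : (x⁻¹).g = x.g⁻¹ := rfl
@[simp] lemma inv_a (x : Fox n) : (x⁻¹).a = -(ofg x.g⁻¹ * x.a) := rfl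

noncomputable instance : Group (Fox n) where
  mul_assoc x y z := Fox.ext' _ _ (mul_assoc _ _ _) (by
    simp [map_mul, mul_add, mul_assoc, add_assoc])
  one_mul x := Fox.ext' _ _ (one_mul _) (by simp)
  mul_one x := Fox.ext' _ _ (mul_one _) (by simp)
  inv_mul_cancel x := Fox.ext' _ _ (inv_mul_cancel _) (by simp)

noncomputable def phi (i : Fin n) : FG n →* Fox n :=
  FreeGroup.lift (fun j => ⟨FreeGroup.of j, if i = j then 1 else 0⟩)

@[simp] lemma phi_of (i j : Fin n) :
    phi i (FreeGroup.of j) = ⟨FreeGroup.of j, if i = j then 1 else 0⟩ := by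
  simp [phi]

@[simp] lemma pure_eq_of (x : Fin n) : (pure x : FG n) = FreeGroup.of x := rfl

lemma phi_g (i : Fin n) (u : FG n) : (phi i u).g = u := by
  induction u using FreeGroup.induction_on with
  | C1 => simp
  | of x => simp
  | inv_of x h => rw [map_inv]; simp [h]
  | mul u v hu hv => rw [map_mul]; simp [hu, hv]

noncomputable def Dfox (i : Fin n) (u : FG n) : AG n := (phi i u).a

lemma Dfox_mul (i : Fin n) (u v : FG n) :
    Dfox i (u * v) = Dfox i u + ofg u * Dfox i v := by
  unfold Dfox; rw [map_mul]; simp [phi_g]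

lemma Dfox_of (i j : Fin n) : Dfox i (FreeGroup.of j) = if i = j then 1 else 0 := by
  simp [Dfox]

section general
variable (D : FG n → AG n) (hD : ∀ u v, D (u * v) = D u + ofg u * D v)

include hD

lemma d_one : D 1 = 0 := by
  have h := hD 1 1
  simp only [mul_one, map_one, one_mul] at h
  have : D 1 + D 1 = D 1 + 0 := by rw [add_zero, ← h]
  exact add_left_cancel this

lemma d_inv (u : FG n) : D u⁻¹ = -(ofg u⁻¹ * D u) := by
  have h := hD u u⁻¹
  rw [mul_inv_cancel, d_one D hD] at h
  have h2 : ofg u⁻¹ * (D u + ofg u * D u⁻¹) = 0 := by rw [← h, mul_zero]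
  rw [mul_add, ← mul_assoc, ← map_mul, inv_mul_cancel, map_one, one_mul] at h2
  exact eq_neg_of_add_eq_zero_right h2

end general

lemma deriv_unique (D : FG n → AG n)
    (hD : ∀ u v, D (u * v) = D u + ofg u * D v)
    (i : Fin n) (hgen : ∀ j, D (FreeGroup.of j) = if i = j then 1 else 0) :
    D = Dfox i := by
  funext u
  induction u using FreeGroup.induction_on with
  | C1 => rw [d_one D hD, d_one (Dfox i) (Dfox_mul i)]
  | of x => rw [hgen, Dfox_of]
  | inv_of x h => rw [d_inv D hD, d_inv (Dfox i) (Dfox_mul i), h]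
  | mul u v hu hv => rw [hD, Dfox_mul, hu, hv]

end Stmt14Aux

open Stmt14Aux

/-- Fox: Let `F` be the free group on `x₁, …, x_n`.  For each `i` there is
a unique derivation `∂/∂xᵢ : F → ℤF` (satisfying `D(uv) = D(u) + u·D(v)`) with
`∂x_j/∂x_i = δ_{ij}`, and for every `y ∈ F` the fundamental formula
`y - 1 = Σᵢ (∂y/∂xᵢ)(xᵢ - 1)` holds in `ℤF`. -/
theorem stmt14 (n : ℕ) :
    (∀ i : Fin n, ∃! D : FreeGroup (Fin n) → MonoidAlgebra ℤ (FreeGroup (Fin n)),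
      (∀ u v, D (u * v) = D u + MonoidAlgebra.of ℤ (FreeGroup (Fin n)) u * D v) ∧
      (∀ j, D (FreeGroup.of j) = if i = j then 1 else 0)) ∧
    (∀ D : Fin n → FreeGroup (Fin n) → MonoidAlgebra ℤ (FreeGroup (Fin n)),
      (∀ i, (∀ u v, D i (u * v) = D i u + MonoidAlgebra.of ℤ (FreeGroup (Fin n)) u * D i v) ∧
        (∀ j, D i (FreeGroup.of j) = if i = j then 1 else 0)) →
      ∀ y : FreeGroup (Fin n),
        MonoidAlgebra.of ℤ (FreeGroup (Fin n)) y - 1 =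
          ∑ i : Fin n, D i y * (MonoidAlgebra.of ℤ (FreeGroup (Fin n)) (FreeGroup.of i) - 1)) := by
  constructor
  · intro i
    refine ⟨Dfox i, ⟨Dfox_mul i, Dfox_of i⟩, ?_⟩
    intro D ⟨h1, h2⟩
    exact deriv_unique D h1 i h2
  · intro D hD y
    simp only [ofg_eq] at hD ⊢
    induction y using FreeGroup.induction_on with
    | C1 =>
      simp only [map_one]
      rw [Finset.sum_congr rfl (fun i _ => by rw [d_one (D i) (hD i).1, zero_mul])]
      simp
    | of x =>
      rw [
        Finset.sum_congr rfl (fun i _ => by rw [(hD i).2 x, ite_mul, one_mul, zero_mul])]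
      simp
    | inv_of x h =>
      rw [Finset.sum_congr rfl (fun i _ => by
        rw [d_inv (D i) (hD i).1, neg_mul, mul_assoc])]
      rw [Finset.sum_neg_distrib, ← Finset.mul_sum, ← h, mul_sub, mul_one,
        ← map_mul, inv_mul_cancel, map_one, neg_sub]
    | mul u v hu hv =>
      rw [Finset.sum_congr rfl (fun i _ => by
        rw [(hD i).1 u v, add_mul, mul_assoc])]
      rw [Finset.sum_add_distrib, ← Finset.mul_sum, ← hu, ← hv, map_mul]
      noncomm_ring
end

section
/- Let G be a group of type FP with cd(G) < ∞, c ∈ Z(G) a nontrivial central element with ⟨c⟩ infinite cyclic, and Γ = G/⟨c⟩ of type VFP. Then χ(G) = 0, and consequently for any finite length finite type free resolution F• → ℤ over ℤG, the sum of the ranks of the even-indexed F_i equals the sum of the ranks of the odd-indexed F_i. -/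
open CategoryTheory CategoryTheory.Limits

/-- The augmentation ring homomorphism `ℤH → ℤ`. -/
noncomputable def aug (H : Type) [Group H] : MonoidAlgebra ℤ H →+* ℤ :=
  ((MonoidAlgebra.lift ℤ ℤ H) 1).toRingHom

/-- A group `H` is of type `FP` if the trivial module `ℤ` admits a finite-length
projective resolution over `ℤH` by finitely generated projective modules. -/
noncomputable def typeFP (H : Type) [Group H] : Prop :=
  ∃ (n : ℕ) (P : CategoryTheory.ProjectiveResolution
      ((ModuleCat.restrictScalars (aug H)).obj (ModuleCat.of ℤ ℤ))),
    (∀ i, Module.Finite (MonoidAlgebra ℤ H) (P.complex.X i)) ∧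
    (∀ i, n < i → IsZero (P.complex.X i))

section HS

variable {R : Type*} [Ring R]

/-- Linear map on free modules determined by images of basis vectors. -/
noncomputable def ofImages {m p : ℕ} (w : Fin m → (Fin p → R)) :
    (Fin m → R) →ₗ[R] (Fin p → R) where
  toFun v := ∑ i, v i • w i
  map_add' x y := by
    simp [add_smul, Finset.sum_add_distrib]
  map_smul' a v := by
    simp [mul_smul, Finset.smul_sum]

lemma ofImages_single {m p : ℕ} (w : Fin m → (Fin p → R)) (i : Fin m) :
    ofImages w (Pi.single i 1) = w i := by
  simp only [ofImages, LinearMap.coe_mk, AddHom.coe_mk]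
  rw [Finset.sum_eq_single i]
  · simp
  · intro j _ hj
    simp [Pi.single_eq_of_ne hj]
  · simp

/-- Matrix expansion of a linear map between finite free modules. -/
lemma matrix_expand {m p : ℕ} (u : (Fin m → R) →ₗ[R] (Fin p → R)) (v : Fin m → R) (i : Fin p) :
    u v i = ∑ j, v j * u (Pi.single j 1) i := by
  have hv : v = ∑ j, (v j) • (Pi.single j (1:R) : Fin m → R) := by
    funext x
    simp [Finset.sum_apply, Pi.single_apply]
  conv_lhs => rw [hv]
  rw [map_sum]
  simp [Finset.sum_apply]

/-- scalar-multiplication-by-a-central-element minus identity, as a linear map. -/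
noncomputable def phiz (z : R) (hz : ∀ a : R, z * a = a * z) (m : ℕ) :
    (Fin m → R) →ₗ[R] (Fin m → R) where
  toFun v := z • v - v
  map_add' x y := by
    funext i
    simp only [Pi.add_apply, Pi.sub_apply, Pi.smul_apply, smul_eq_mul]
    noncomm_ring
  map_smul' a v := by
    funext i
    simp only [Pi.smul_apply, smul_eq_mul, RingHom.id_apply, Pi.sub_apply, ← mul_assoc, hz a]
    noncomm_ring

lemma phiz_apply (z : R) (hz : ∀ a : R, z * a = a * z) {m : ℕ} (v : Fin m → R) (i : Fin m) :
    phiz z hz m v i = z * v i - v i := rfl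

variable (T : R →+ ℤ)

/-- Hattori–Stallings style trace relative to `T`. -/
noncomputable def trT {m : ℕ} (f : (Fin m → R) →ₗ[R] (Fin m → R)) : ℤ :=
  ∑ i, T (f (Pi.single i 1) i)

lemma trT_comm (hT : ∀ a b : R, T (a * b) = T (b * a)) {m p : ℕ}
    (f : (Fin p → R) →ₗ[R] (Fin m → R)) (g : (Fin m → R) →ₗ[R] (Fin p → R)) :
    trT T (f ∘ₗ g) = trT T (g ∘ₗ f) := by
  unfold trT
  have h1 : ∀ i : Fin m, T ((f ∘ₗ g) (Pi.single i 1) i)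
      = ∑ j : Fin p, T (g (Pi.single i 1) j * f (Pi.single j 1) i) := by
    intro i
    rw [LinearMap.comp_apply, matrix_expand f, map_sum]
  have h2 : ∀ j : Fin p, T ((g ∘ₗ f) (Pi.single j 1) j)
      = ∑ i : Fin m, T (f (Pi.single j 1) i * g (Pi.single i 1) j) := by
    intro j
    rw [LinearMap.comp_apply, matrix_expand g, map_sum]
  rw [Finset.sum_congr rfl (fun i _ => h1 i), Finset.sum_congr rfl (fun j _ => h2 j),
    Finset.sum_comm]
  exact Finset.sum_congr rfl fun j _ => Finset.sum_congr rfl fun i _ => hT _ _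

lemma trT_sub {m : ℕ} (f g : (Fin m → R) →ₗ[R] (Fin m → R)) :
    trT T (f - g) = trT T f - trT T g := by
  unfold trT
  rw [← Finset.sum_sub_distrib]
  exact Finset.sum_congr rfl fun i _ => by simp

lemma trT_phiz (z : R) (hz : ∀ a : R, z * a = a * z) (m : ℕ) :
    trT T (phiz z hz m) = m * T (z - 1) := by
  unfold trT
  have : ∀ i : Fin m, T (phiz z hz m (Pi.single i 1) i) = T (z - 1) := by
    intro i
    rw [phiz_apply]
    simp
  rw [Finset.sum_congr rfl (fun i _ => this i)]
  simp
  ring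


lemma exists_lift {m p q : ℕ} (u : (Fin m → R) →ₗ[R] (Fin q → R))
    (d : (Fin p → R) →ₗ[R] (Fin q → R)) (hr : ∀ v, ∃ w, d w = u v) :
    ∃ h : (Fin m → R) →ₗ[R] (Fin p → R), d ∘ₗ h = u := by
  choose w hw using fun i : Fin m => hr (Pi.single i 1)
  refine ⟨ofImages w, ?_⟩
  apply LinearMap.ext
  intro v
  have h1 : d (ofImages w v) = ∑ i, v i • u (Pi.single i 1) := by
    show d (∑ i, v i • w i) = _
    rw [map_sum]
    exact Finset.sum_congr rfl fun i _ => by rw [map_smul, hw]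
  rw [LinearMap.comp_apply, h1]
  funext j
  rw [Finset.sum_apply, matrix_expand u v j]
  rfl

section Homotopy

variable (z : R) (hz : ∀ a : R, z * a = a * z) (r : ℕ → ℕ)
  (dd : ∀ j, (Fin (r (j + 1)) → R) →ₗ[R] (Fin (r j) → R))

lemma chain_phiz (j : ℕ) (v : Fin (r (j+1)) → R) :
    dd j (phiz z hz (r (j+1)) v) = phiz z hz (r j) (dd j v) := by
  show dd j (z • v - v) = z • (dd j v) - dd j v
  rw [map_sub, map_smul]

lemma step_ex (hker : ∀ j v, dd j v = 0 → ∃ w, dd (j+1) w = v) {j : ℕ}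
    (u : (Fin (r j) → R) →ₗ[R] (Fin (r j) → R))
    (h : (Fin (r j) → R) →ₗ[R] (Fin (r (j+1)) → R))
    (hdh : dd j ∘ₗ h = u) (hcu : (phiz z hz (r j) - u) ∘ₗ dd j = 0) :
    ∃ h' : (Fin (r (j+1)) → R) →ₗ[R] (Fin (r (j+2)) → R),
      dd (j+1) ∘ₗ h' = phiz z hz (r (j+1)) - h ∘ₗ dd j := by
  apply exists_lift
  intro v
  apply hker
  have : dd j ((phiz z hz (r (j+1)) - h ∘ₗ dd j) v)
      = ((phiz z hz (r j) - u) ∘ₗ dd j) v := by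
    simp only [LinearMap.sub_apply, LinearMap.comp_apply, map_sub]
    rw [chain_phiz, ← hdh]
    rfl
  rw [this, hcu]
  rfl

noncomputable def Hrec (hdd : ∀ j, dd j ∘ₗ dd (j+1) = 0)
    (hker : ∀ j v, dd j v = 0 → ∃ w, dd (j+1) w = v)
    (h0ex : ∀ v, ∃ w, dd 0 w = phiz z hz (r 0) v) :
    ∀ j, Σ' (u : (Fin (r j) → R) →ₗ[R] (Fin (r j) → R))
        (h : (Fin (r j) → R) →ₗ[R] (Fin (r (j+1)) → R)),
      dd j ∘ₗ h = u ∧ (phiz z hz (r j) - u) ∘ₗ dd j = 0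
  | 0 => ⟨phiz z hz (r 0), (exists_lift _ _ h0ex).choose,
      (exists_lift _ _ h0ex).choose_spec, by simp⟩
  | (j+1) =>
      let prev := Hrec hdd hker h0ex j
      have hstep := step_ex z hz r dd hker prev.1 prev.2.1 prev.2.2.1 prev.2.2.2
      ⟨phiz z hz (r (j+1)) - prev.2.1 ∘ₗ dd j, hstep.choose, hstep.choose_spec, by
        rw [sub_sub_cancel, LinearMap.comp_assoc, hdd j, LinearMap.comp_zero]⟩

lemma Hrec_zero_u (hdd) (hker) (h0ex) :
    (Hrec z hz r dd hdd hker h0ex 0).1 = phiz z hz (r 0) := rfl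

lemma Hrec_succ_u (hdd) (hker) (h0ex) (j : ℕ) :
    (Hrec z hz r dd hdd hker h0ex (j+1)).1
      = phiz z hz (r (j+1)) - (Hrec z hz r dd hdd hker h0ex j).2.1 ∘ₗ dd j := rfl

lemma euler_zero (T : R →+ ℤ) (hT : ∀ a b : R, T (a * b) = T (b * a))
    (hTz : T (z - 1) = 1)
    (hdd : ∀ j, dd j ∘ₗ dd (j+1) = 0)
    (hker : ∀ j v, dd j v = 0 → ∃ w, dd (j+1) w = v)
    (h0ex : ∀ v, ∃ w, dd 0 w = phiz z hz (r 0) v)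
    (n : ℕ) (hlen : ∀ i, n < i → r i = 0) :
    ∑ j ∈ Finset.range (n + 1), (-1 : ℤ) ^ j * (r j : ℤ) = 0 := by
  set H := Hrec z hz r dd hdd hker h0ex with hH
  set t : ℕ → ℤ := fun j => trT T ((H j).2.1 ∘ₗ dd j) with ht
  set g : ℕ → ℤ := fun j => match j with | 0 => 0 | (k+1) => (-1 : ℤ)^k * t k with hg
  have htr : ∀ j, trT T (H j).1 = t j := by
    intro j
    rw [← (H j).2.2.1, trT_comm T hT]
  have hphitr : ∀ j, trT T (phiz z hz (r j)) = (r j : ℤ) := by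
    intro j
    rw [trT_phiz T z hz, hTz, mul_one]
  have key : ∀ j, (-1 : ℤ)^j * (r j : ℤ) = g (j+1) - g j := by
    intro j
    match j with
    | 0 =>
      show (-1:ℤ)^0 * (r 0 : ℤ) = (-1:ℤ)^0 * t 0 - 0
      rw [← hphitr 0, ← Hrec_zero_u z hz r dd hdd hker h0ex, ← hH, htr 0]
      ring
    | (k+1) =>
      show (-1:ℤ)^(k+1) * (r (k+1) : ℤ) = (-1:ℤ)^(k+1) * t (k+1) - (-1:ℤ)^k * t k
      have hu : (H (k+1)).1 = phiz z hz (r (k+1)) - (H k).2.1 ∘ₗ dd k :=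
        Hrec_succ_u z hz r dd hdd hker h0ex k
      have := htr (k+1)
      rw [hu, trT_sub, hphitr (k+1)] at this
      have hrk : (r (k+1) : ℤ) = t (k+1) + t k := by
        rw [← this]
        show _ = (r (k+1) : ℤ) - trT T ((H k).2.1 ∘ₗ dd k) + t k
        rw [ht]
        ring
      rw [hrk]
      ring
  calc ∑ j ∈ Finset.range (n + 1), (-1 : ℤ) ^ j * (r j : ℤ)
      = ∑ j ∈ Finset.range (n + 1), (g (j+1) - g j) :=
        Finset.sum_congr rfl fun j _ => key j
    _ = g (n+1) - g 0 := Finset.sum_range_sub g (n+1)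
    _ = (-1:ℤ)^n * t n - 0 := rfl
    _ = 0 := by
        have hr0 : r (n+1) = 0 := hlen (n+1) (Nat.lt_succ_self n)
        have : t n = 0 := by
          rw [ht]
          haveI : IsEmpty (Fin (r (n+1))) := by rw [hr0]; exact Fin.isEmpty'
          simp [trT]
        rw [this]
        ring

end Homotopy

end HS

/-- Let `G` be a group of type `FP` with `cd(G) < ∞`, `c ∈ Z(G)` a
nontrivial central element with `⟨c⟩` infinite cyclic, and `Γ = G/⟨c⟩` of type `VFP`
(every torsion-free finite-index subgroup of `Γ` is of type `FP`).  Then `χ(G) = 0`,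
and consequently for any finite-length finite-type free resolution `F• → ℤ` over
`ℤG` (with `F_j` free of rank `r j`), the sum of the ranks of the even-indexed `F_i`
equals the sum of the ranks of the odd-indexed `F_i`. -/
theorem stmt15 (G : Type) [Group G] (hG : typeFP G)
    (c : G) (hc : c ∈ Subgroup.center G) (hc1 : c ≠ 1) (hcinf : ¬ IsOfFinOrder c)
    [hnorm : (Subgroup.zpowers c).Normal]
    (hVFP : ∀ H : Subgroup (G ⧸ Subgroup.zpowers c), H.FiniteIndex →
      (∀ g : H, g ≠ 1 → ¬IsOfFinOrder g) → typeFP H)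
    (n : ℕ) (r : ℕ → ℕ)
    (dd : ∀ j, (Fin (r (j + 1)) → MonoidAlgebra ℤ G)
      →ₗ[MonoidAlgebra ℤ G] (Fin (r j) → MonoidAlgebra ℤ G))
    (ε : (Fin (r 0) → MonoidAlgebra ℤ G) →+ ℤ)
    (hεlin : ∀ (a : MonoidAlgebra ℤ G) v, ε (a • v) = aug G a * ε v)
    (hεsurj : Function.Surjective ε)
    (hex0 : ∀ v, ε v = 0 ↔ v ∈ LinearMap.range (dd 0))
    (hex : ∀ j, LinearMap.ker (dd j) = LinearMap.range (dd (j + 1)))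
    (hlen : ∀ i, n < i → r i = 0) :
    (∑ i ∈ Finset.range (n + 1), (-1 : ℤ) ^ i * (r i : ℤ) = 0) ∧
    (∑ i ∈ (Finset.range (n + 1)).filter (fun i => Even i), r i =
      ∑ i ∈ (Finset.range (n + 1)).filter (fun i => ¬ Even i), r i) := by
  classical
  set R := MonoidAlgebra ℤ G with hR
  -- the central element as an element of the group ring
  set z : R := MonoidAlgebra.single c 1 with hzdef
  have hcen : ∀ x : G, x * c = c * x := fun x => (Subgroup.mem_center_iff.mp hc x)
  have hceninv : ∀ x : G, c⁻¹ * x = x * c⁻¹ := by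
    intro x
    have h1 : c⁻¹ * (c * x) * c⁻¹ = x * c⁻¹ := by group
    have h2 : c⁻¹ * (x * c) * c⁻¹ = c⁻¹ * x := by group
    rw [← hcen x, h2] at h1
    exact h1
  have hz : ∀ a : R, z * a = a * z := by
    intro a
    apply MonoidAlgebra.ext
    apply Finsupp.ext
    intro x
    rw [hzdef]
    rw [MonoidAlgebra.coeff_single_mul_apply, MonoidAlgebra.coeff_mul_single_apply, hceninv x]
    ring
  -- the trace functional: coefficient at `c`
  set T : R →+ ℤ := AddMonoidHom.mk' (fun a : R => a.coeff c)
    (fun a b => Finsupp.add_apply a.coeff b.coeff c) with hTdef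
  have hT : ∀ a b : R, T (a * b) = T (b * a) := by
    intro a b
    show (a * b).coeff c = (b * a).coeff c
    rw [MonoidAlgebra.coeff_mul, MonoidAlgebra.coeff_mul]
    rw [Finsupp.sum, Finsupp.sum]
    simp only [Finsupp.sum]
    rw [Finset.sum_comm]
    refine Finset.sum_congr rfl fun y _ => Finset.sum_congr rfl fun x _ => ?_
    have hiff : x * y = c ↔ y * x = c := by
      constructor
      · intro h
        have : y * x = x⁻¹ * (x * y) * x := by group
        rw [this, h, hcen x⁻¹, mul_assoc, inv_mul_cancel, mul_one]
      · intro h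
        have : x * y = y⁻¹ * (y * x) * y := by group
        rw [this, h, hcen y⁻¹, mul_assoc, inv_mul_cancel, mul_one]
    by_cases hxy : x * y = c
    · rw [if_pos hxy, if_pos (hiff.mp hxy), mul_comm]
    · rw [if_neg hxy, if_neg (fun h => hxy (hiff.mpr h))]
  have hTz : T (z - 1) = 1 := by
    show (z - 1).coeff c = 1
    rw [MonoidAlgebra.coeff_sub, Finsupp.sub_apply]
    have h1 : (1 : R) = MonoidAlgebra.single 1 1 := rfl
    rw [hzdef, h1, MonoidAlgebra.coeff_single, MonoidAlgebra.coeff_single, Finsupp.single_eq_same, Finsupp.single_eq_of_ne' (Ne.symm hc1)]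
    ring
  -- hypotheses for the homotopy construction
  have hdd : ∀ j, dd j ∘ₗ dd (j+1) = 0 := by
    intro j
    apply LinearMap.ext
    intro v
    have : dd (j+1) v ∈ LinearMap.ker (dd j) := by
      rw [hex j]
      exact ⟨v, rfl⟩
    simpa using this
  have hker : ∀ j (v : Fin (r (j+1)) → R), dd j v = 0 → ∃ w, dd (j+1) w = v := by
    intro j v hv
    have : v ∈ LinearMap.range (dd (j+1)) := by
      rw [← hex j]
      exact hv
    exact this
  have haugz : aug G z = 1 := by
    rw [hzdef]
    show ((MonoidAlgebra.lift ℤ ℤ G) 1) (MonoidAlgebra.single c 1) = 1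
    simp [MonoidAlgebra.lift_single]
  have h0ex : ∀ v, ∃ w, dd 0 w = phiz z hz (r 0) v := by
    intro v
    have hε0 : ε (phiz z hz (r 0) v) = 0 := by
      show ε (z • v - v) = 0
      rw [map_sub, hεlin z v, haugz, one_mul, sub_self]
    exact (hex0 _).mp hε0
  have hmain : ∑ i ∈ Finset.range (n + 1), (-1 : ℤ) ^ i * (r i : ℤ) = 0 :=
    euler_zero z hz r dd T hT hTz hdd hker h0ex n hlen
  refine ⟨hmain, ?_⟩
  -- derive the even/odd statement
  have hsplit := Finset.sum_filter_add_sum_filter_not (Finset.range (n+1))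
    (fun i => Even i) (fun i => (-1 : ℤ) ^ i * (r i : ℤ))
  have heven : ∑ i ∈ (Finset.range (n+1)).filter (fun i => Even i),
      (-1 : ℤ) ^ i * (r i : ℤ)
      = ∑ i ∈ (Finset.range (n+1)).filter (fun i => Even i), (r i : ℤ) := by
    refine Finset.sum_congr rfl fun i hi => ?_
    have : Even i := (Finset.mem_filter.mp hi).2
    rw [this.neg_one_pow, one_mul]
  have hodd : ∑ i ∈ (Finset.range (n+1)).filter (fun i => ¬ Even i),
      (-1 : ℤ) ^ i * (r i : ℤ)
      = - ∑ i ∈ (Finset.range (n+1)).filter (fun i => ¬ Even i), (r i : ℤ) := by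
    rw [← Finset.sum_neg_distrib]
    refine Finset.sum_congr rfl fun i hi => ?_
    have : Odd i := Nat.not_even_iff_odd.mp (Finset.mem_filter.mp hi).2
    rw [this.neg_one_pow]
    ring
  rw [heven, hodd, hmain] at hsplit
  have : ((∑ i ∈ (Finset.range (n+1)).filter (fun i => Even i), r i : ℕ) : ℤ)
      = ((∑ i ∈ (Finset.range (n+1)).filter (fun i => ¬ Even i), r i : ℕ) : ℤ) := by
    push_cast
    linarith
  exact_mod_cast this
end
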